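/- Let ξ, η ∈ C^∞(ℂ; ℂ) satisfy on all of ℂ the conformality identity ξ_z̄ ξ̄_z̄ + η_z̄ η̄_z̄ = 0 and the isotropy identity ξ_z̄z̄ ξ̄_z̄z̄ + η_z̄z̄ η̄_z̄z̄ = 0. Then the identity ( ξ̄_z̄z̄ η̄_z̄ − η̄_z̄z̄ ξ̄_z̄ ) · ( ξ_z̄z̄ η̄_z̄ − η̄_z̄z̄ ξ_z̄ ) = 0 holds on all of ℂ. If moreover ξ and η are real-analytic, then at least one of the two factors vanishes identically on ℂ. -/

import Mathlib

noncomputable section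

open MeasureTheory
open scoped Classical

abbrev E3 : Type := EuclideanSpace ℝ (Fin 3)

abbrev V5 : Type := ℝ × ℂ × ℂ

/-- Squared Euclidean norm on ℝ ⊕ ℂ ⊕ ℂ. -/
def nsq (p : V5) : ℝ := p.1 ^ 2 + Complex.normSq p.2.1 + Complex.normSq p.2.2

/-- Real inner product on ℝ ⊕ ℂ ⊕ ℂ. -/
def vdot (p q : V5) : ℝ :=
  p.1 * q.1 + (p.2.1 * (starRingEnd ℂ) q.2.1).re + (p.2.2 * (starRingEnd ℂ) q.2.2).re

/-- The circle action R_α · (t, ζ₁, ζ₂) = (t, e^{iα}ζ₁, e^{2iα}ζ₂) on ℝ ⊕ ℂ ⊕ ℂ. -/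
def circAct (α : ℝ) (p : V5) : V5 :=
  (p.1, Complex.exp (Complex.I * (α : ℂ)) * p.2.1,
    Complex.exp (2 * Complex.I * (α : ℂ)) * p.2.2)

/-- Rotation of ℝ³ by angle α about the x₃-axis. -/
def rot3 (α : ℝ) (x : E3) : E3 :=
  EuclideanSpace.single (0 : Fin 3) (Real.cos α * x 0 - Real.sin α * x 1) +
    EuclideanSpace.single (1 : Fin 3) (Real.sin α * x 0 + Real.cos α * x 1) +
    EuclideanSpace.single (2 : Fin 3) (x 2)

/-- The unit sphere S² ⊂ ℝ³. -/
def sphere2 : Set E3 := Metric.sphere (0 : E3) 1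

def northPole : E3 := EuclideanSpace.single (2 : Fin 3) (1 : ℝ)

def southPole : E3 := EuclideanSpace.single (2 : Fin 3) (-1 : ℝ)

/-- Degree-zero homogeneous extension of a map defined on the sphere. -/
def homExt (ω : E3 → V5) : E3 → V5 := fun x => ω (‖x‖⁻¹ • x)

def homExtR (g : E3 → ℝ) : E3 → ℝ := fun x => g (‖x‖⁻¹ • x)

/-- Squared Euclidean norm of the differential. -/
def gradSq (f : E3 → V5) (x : E3) : ℝ :=
  ∑ i : Fin 3, nsq (fderiv ℝ f x (EuclideanSpace.single i (1 : ℝ)))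

def gradSqR (f : E3 → ℝ) (x : E3) : ℝ :=
  ∑ i : Fin 3, fderiv ℝ f x (EuclideanSpace.single i (1 : ℝ)) ^ 2

/-- Componentwise Euclidean Laplacian. -/
def lap (f : E3 → V5) (x : E3) : V5 :=
  ∑ i : Fin 3,
    fderiv ℝ (fun y => fderiv ℝ f y (EuclideanSpace.single i (1 : ℝ))) x
      (EuclideanSpace.single i (1 : ℝ))

/-- ω : S² → S⁴ is a (smooth) harmonic sphere: it maps the sphere into the unit
sphere of ℝ ⊕ ℂ ⊕ ℂ, its degree-zero homogeneous extension Q is smooth away from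
the origin, and ΔQ + |∇Q|²Q = 0 on ℝ³ ∖ {0}. -/
def IsHarmonicSphere (ω : E3 → V5) : Prop :=
  (∀ x ∈ sphere2, nsq (ω x) = 1) ∧
    ContDiffOn ℝ (⊤ : ℕ∞) (homExt ω) {(0 : E3)}ᶜ ∧
    ∀ x : E3, x ≠ 0 → lap (homExt ω) x + gradSq (homExt ω) x • homExt ω x = 0

/-- S¹-equivariance of a sphere map. -/
def EquivariantS (ω : E3 → V5) : Prop :=
  ∀ α : ℝ, ∀ x ∈ sphere2, ω (rot3 α x) = circAct α (ω x)

/-- S¹-equivariance of a vector field on ℝ³. -/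
def EquivariantV (X : E3 → V5) : Prop :=
  ∀ (α : ℝ) (x : E3), X (rot3 α x) = circAct α (X x)

/-- Tangential part X_T = X - (w·X)w. -/
def tangPart (w X : E3 → V5) : E3 → V5 := fun x => X x - vdot (w x) (X x) • w x

/-- Second variation δ²E₀(w)[X] = ∫ (|∇X_T|² - |∇w|²|X_T|²). -/
def secondVar (w X : E3 → V5) : ℝ :=
  ∫ x : E3, (gradSq (tangPart w X) x - gradSq w x * nsq (tangPart w X x))

/-- Stability of a tangent map within the S¹-equivariant class. -/
def IsStable (w : E3 → V5) : Prop :=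
  ∀ X : E3 → V5, ContDiff ℝ (⊤ : ℕ∞) X → HasCompactSupport X → EquivariantV X →
    0 ≤ secondVar w X

def conj' (z : ℂ) : ℂ := (starRingEnd ℂ) z

/-- The twistor fibration, in homogeneous coordinates on ℂ⁴ ∖ {0}. -/
def tau4 (w0 w1 w2 w3 : ℂ) : V5 :=
  ((Complex.normSq w0 + Complex.normSq w3 - Complex.normSq w1 - Complex.normSq w2) /
      (Complex.normSq w0 + Complex.normSq w1 + Complex.normSq w2 + Complex.normSq w3),
    2 * (conj' w0 * w1 + conj' w2 * w3) /
      ((Complex.normSq w0 + Complex.normSq w1 + Complex.normSq w2 + Complex.normSq w3 : ℝ) : ℂ),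
    2 * (conj' w0 * w2 - conj' w1 * w3) /
      ((Complex.normSq w0 + Complex.normSq w1 + Complex.normSq w2 + Complex.normSq w3 : ℝ) : ℂ))

/-- Inverse stereographic projection ℂ → S² (from the south pole). -/
def stInv (z : ℂ) : E3 :=
  EuclideanSpace.single (0 : Fin 3) (2 * z.re / (1 + Complex.normSq z)) +
    EuclideanSpace.single (1 : Fin 3) (2 * z.im / (1 + Complex.normSq z)) +
    EuclideanSpace.single (2 : Fin 3) ((1 - Complex.normSq z) / (1 + Complex.normSq z))

/-- Equatorial embedding ω_eq^{(1)}(x) = (x₃, x₁ + ix₂, 0). -/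
def omegaEq1 (x : E3) : V5 := (x 2, (x 0 : ℂ) + (x 1 : ℂ) * Complex.I, 0)

/-- Equatorial embedding ω_eq^{(2)}(x) = (x₃, 0, x₁ + ix₂). -/
def omegaEq2 (x : E3) : V5 := (x 2, 0, (x 0 : ℂ) + (x 1 : ℂ) * Complex.I)

/-- The horizontal algebraic curve composed with the twistor fibration. -/
def liftCurve (μ1 μ2 z0 z1 : ℂ) : V5 :=
  tau4 (z0 ^ 3) (μ1 * z0 ^ 2 * z1) (μ2 * z0 * z1 ^ 2) (-(μ1 * μ2 / 3) * z1 ^ 3)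

/-- The explicit two-parameter family ω_{μ₁,μ₂} of equivariant harmonic spheres,
as a map defined on S² via the identification [z₀, z₁] ↦ σ₂⁻¹(z₁/z₀). -/
def omegaFam (μ1 μ2 : ℂ) (x : E3) : V5 :=
  if x = southPole then
    if μ1 = 0 ∧ μ2 = 0 then ((1 : ℝ), 0, 0)
    else if μ1 ≠ 0 ∧ μ2 ≠ 0 then liftCurve μ1 μ2 0 1
    else ((-1 : ℝ), 0, 0)
  else liftCurve μ1 μ2 ((1 + x 2 : ℝ) : ℂ) ((x 0 : ℂ) + (x 1 : ℂ) * Complex.I)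

/-- Wirtinger derivative ∂f/∂z̄ = ½(∂_{x₁} + i ∂_{x₂})f. -/
def wd (f : ℂ → ℂ) (z : ℂ) : ℂ :=
  (1 / 2 : ℂ) * (fderiv ℝ f z 1 + Complex.I * fderiv ℝ f z Complex.I)

/-- Surface (2-dimensional Hausdorff) measure on ℝ³. -/
def surf : Measure E3 := Measure.hausdorffMeasure 2

/-- If smooth ξ, η : ℂ → ℂ satisfy the conformality identity
ξ_z̄ ξ̄_z̄ + η_z̄ η̄_z̄ = 0 and the isotropy identity ξ_z̄z̄ ξ̄_z̄z̄ + η_z̄z̄ η̄_z̄z̄ = 0, then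
(ξ̄_z̄z̄ η̄_z̄ − η̄_z̄z̄ ξ̄_z̄)(ξ_z̄z̄ η̄_z̄ − η̄_z̄z̄ ξ_z̄) = 0 on ℂ; if moreover ξ, η are
real-analytic, then one of the two factors vanishes identically. -/
lemma wd_contDiff {f : ℂ → ℂ} (hf : ContDiff ℝ (⊤ : ℕ∞) f) : ContDiff ℝ (⊤ : ℕ∞) (wd f) := by
  have h1 : ContDiff ℝ (⊤ : ℕ∞) (fderiv ℝ f) := hf.fderiv_right le_rfl
  have e1 : ContDiff ℝ (⊤ : ℕ∞) (fun z => fderiv ℝ f z 1) :=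
    ((ContinuousLinearMap.apply ℝ ℂ (1 : ℂ)).contDiff).comp h1
  have e2 : ContDiff ℝ (⊤ : ℕ∞) (fun z => fderiv ℝ f z Complex.I) :=
    ((ContinuousLinearMap.apply ℝ ℂ (Complex.I : ℂ)).contDiff).comp h1
  exact contDiff_const.mul (e1.add (contDiff_const.mul e2))

lemma wd_mul {f g : ℂ → ℂ} {z : ℂ} (hf : DifferentiableAt ℝ f z)
    (hg : DifferentiableAt ℝ g z) :
    wd (fun t => f t * g t) z = wd f z * g z + f z * wd g z := by
  unfold wd
  rw [fderiv_fun_mul hf hg]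
  simp [ContinuousLinearMap.smul_apply, smul_eq_mul]
  ring

lemma wd_add {f g : ℂ → ℂ} {z : ℂ} (hf : DifferentiableAt ℝ f z)
    (hg : DifferentiableAt ℝ g z) :
    wd (fun t => f t + g t) z = wd f z + wd g z := by
  unfold wd
  rw [fderiv_fun_add hf hg]
  simp
  ring

lemma wd_zero (z : ℂ) : wd (fun _ => (0:ℂ)) z = 0 := by
  unfold wd; simp

lemma wd_analytic {f : ℂ → ℂ} (hf : ∀ z, AnalyticAt ℝ f z) (z : ℂ) :
    AnalyticAt ℝ (wd f) z := by
  have h1 : ∀ w, AnalyticAt ℝ (fderiv ℝ f) w := fun w => (hf w).fderiv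
  have e1 : AnalyticAt ℝ (fun z => fderiv ℝ f z 1) z :=
    ((ContinuousLinearMap.apply ℝ ℂ (1 : ℂ)).analyticAt _).comp (h1 z)
  have e2 : AnalyticAt ℝ (fun z => fderiv ℝ f z Complex.I) z :=
    ((ContinuousLinearMap.apply ℝ ℂ (Complex.I : ℂ)).analyticAt _).comp (h1 z)
  exact analyticAt_const.mul (e1.add (analyticAt_const.mul e2))

lemma conj'_contDiff {f : ℂ → ℂ} (hf : ContDiff ℝ (⊤ : ℕ∞) f) :
    ContDiff ℝ (⊤ : ℕ∞) (fun t => conj' (f t)) :=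
  Complex.conjCLE.contDiff.comp hf

lemma conj'_analytic {f : ℂ → ℂ} (hf : ∀ z, AnalyticAt ℝ f z) (z : ℂ) :
    AnalyticAt ℝ (fun t => conj' (f t)) z :=
  ((Complex.conjCLE : ℂ →L[ℝ] ℂ).analyticAt _).comp (hf z)

theorem statement10 (ξ η : ℂ → ℂ)
    (hξ : ContDiff ℝ (⊤ : ℕ∞) ξ) (hη : ContDiff ℝ (⊤ : ℕ∞) η)
    (hconf : ∀ z : ℂ,
      wd ξ z * wd (fun t => conj' (ξ t)) z + wd η z * wd (fun t => conj' (η t)) z = 0)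
    (hiso : ∀ z : ℂ,
      wd (wd ξ) z * wd (wd (fun t => conj' (ξ t))) z +
        wd (wd η) z * wd (wd (fun t => conj' (η t))) z = 0) :
    (∀ z : ℂ,
      (wd (wd (fun t => conj' (ξ t))) z * wd (fun t => conj' (η t)) z -
          wd (wd (fun t => conj' (η t))) z * wd (fun t => conj' (ξ t)) z) *
        (wd (wd ξ) z * wd (fun t => conj' (η t)) z -
          wd (wd (fun t => conj' (η t))) z * wd ξ z) = 0) ∧
    ((∀ z : ℂ, AnalyticAt ℝ ξ z) → (∀ z : ℂ, AnalyticAt ℝ η z) →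
      ((∀ z : ℂ,
          wd (wd (fun t => conj' (ξ t))) z * wd (fun t => conj' (η t)) z -
            wd (wd (fun t => conj' (η t))) z * wd (fun t => conj' (ξ t)) z = 0) ∨
        (∀ z : ℂ,
          wd (wd ξ) z * wd (fun t => conj' (η t)) z -
            wd (wd (fun t => conj' (η t))) z * wd ξ z = 0))) := by
  have hcξ : ContDiff ℝ (⊤ : ℕ∞) (fun t => conj' (ξ t)) := conj'_contDiff hξ
  have hcη : ContDiff ℝ (⊤ : ℕ∞) (fun t => conj' (η t)) := conj'_contDiff hη
  have da : Differentiable ℝ (wd ξ) := (wd_contDiff hξ).differentiable (by norm_num)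
  have dA : Differentiable ℝ (wd (fun t => conj' (ξ t))) := (wd_contDiff hcξ).differentiable (by norm_num)
  have db : Differentiable ℝ (wd η) := (wd_contDiff hη).differentiable (by norm_num)
  have dB : Differentiable ℝ (wd (fun t => conj' (η t))) := (wd_contDiff hcη).differentiable (by norm_num)
  -- derived identity (derivative of hconf)
  have key : ∀ z : ℂ,
      wd (wd ξ) z * wd (fun t => conj' (ξ t)) z +
        wd ξ z * wd (wd (fun t => conj' (ξ t))) z +
      (wd (wd η) z * wd (fun t => conj' (η t)) z +
        wd η z * wd (wd (fun t => conj' (η t))) z) = 0 := by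
    intro z
    have hF : (fun t => wd ξ t * wd (fun t => conj' (ξ t)) t +
        wd η t * wd (fun t => conj' (η t)) t) = (fun _ => (0:ℂ)) := funext hconf
    have h0 : wd (fun t => wd ξ t * wd (fun t => conj' (ξ t)) t +
        wd η t * wd (fun t => conj' (η t)) t) z = 0 := by rw [hF]; exact wd_zero z
    rw [wd_add ((da z).fun_mul (dA z)) ((db z).fun_mul (dB z)),
      wd_mul (da z) (dA z), wd_mul (db z) (dB z)] at h0
    exact h0
  have part1 : ∀ z : ℂ,
      (wd (wd (fun t => conj' (ξ t))) z * wd (fun t => conj' (η t)) z -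
          wd (wd (fun t => conj' (η t))) z * wd (fun t => conj' (ξ t)) z) *
        (wd (wd ξ) z * wd (fun t => conj' (η t)) z -
          wd (wd (fun t => conj' (η t))) z * wd ξ z) = 0 := by
    intro z
    linear_combination (wd (fun t => conj' (η t)) z) ^ 2 * hiso z -
      (wd (fun t => conj' (η t)) z * wd (wd (fun t => conj' (η t))) z) * key z +
      (wd (wd (fun t => conj' (η t))) z) ^ 2 * hconf z
  refine ⟨part1, fun haξ haη => ?_⟩
  set f1 : ℂ → ℂ := fun z =>
    wd (wd (fun t => conj' (ξ t))) z * wd (fun t => conj' (η t)) z -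
      wd (wd (fun t => conj' (η t))) z * wd (fun t => conj' (ξ t)) z with hf1
  set f2 : ℂ → ℂ := fun z =>
    wd (wd ξ) z * wd (fun t => conj' (η t)) z -
      wd (wd (fun t => conj' (η t))) z * wd ξ z with hf2
  have haA : ∀ z, AnalyticAt ℝ (wd (fun t => conj' (ξ t))) z :=
    wd_analytic (conj'_analytic haξ)
  have haB : ∀ z, AnalyticAt ℝ (wd (fun t => conj' (η t))) z :=
    wd_analytic (conj'_analytic haη)
  have haf2 : ∀ z, AnalyticAt ℝ f2 z := fun z =>
    (((wd_analytic (wd_analytic haξ)) z).mul (haB z)).sub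
      (((wd_analytic haB) z).mul ((wd_analytic haξ) z))
  by_cases hc : ∀ z : ℂ, f1 z = 0
  · exact Or.inl hc
  · push_neg at hc
    obtain ⟨z₀, hz₀⟩ := hc
    right
    -- f1 is continuous (analytic), so f1 ≠ 0 near z₀, hence f2 = 0 near z₀
    have hcont : ContinuousAt f1 z₀ := by
      have : AnalyticAt ℝ f1 z₀ :=
        ((((wd_analytic haA) z₀).mul (haB z₀)).sub
          (((wd_analytic haB) z₀).mul (haA z₀)))
      exact this.continuousAt
    have hne : ∀ᶠ w in nhds z₀, f1 w ≠ 0 := hcont.eventually_ne hz₀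
    have hev : f2 =ᶠ[nhds z₀] 0 := by
      filter_upwards [hne] with w hw
      have := part1 w
      rcases mul_eq_zero.mp this with h | h
      · exact absurd h hw
      · exact h
    have := AnalyticOnNhd.eqOn_zero_of_preconnected_of_eventuallyEq_zero
      (fun z _ => haf2 z) isPreconnected_univ (Set.mem_univ z₀) hev
    intro z
    exact this (Set.mem_univ z)
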